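/- Let D be a (μ,ℵ₀)-regular filter on a set I, T a first-order theory with vocabulary τ, ε < ω, and Δ a set of conjunctions of atomic first-order τ-formulas of the form φ(x̄,ȳ) with x̄ a fixed tuple of ε variables. Then the following are equivalent: (B) D is a (μ,ℵ₀,ε,Δ,T)-moral filter; (C) for every family ⟨M_s : s ∈ I⟩ of models of T, the reduced product ∏_{s∈I} M_s/D is (μ⁺,ε,Δ)-saturated, i.e. every set of at most μ formulas φ(x̄,b̄) with φ ∈ Δ and parameters b̄ from the reduced product, which is finitely satisfiable in the reduced product, is realized in the reduced product. -/

import Mathlib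

open FirstOrder Cardinal

namespace Shelah1064

/-! ### Reduced products of first-order structures with respect to a filter -/

def rpSetoid {I : Type*} (D : Filter I) (M : I → Type*) : Setoid (∀ i, M i) where
  r f g := ∀ᶠ i in D, f i = g i
  iseqv := ⟨fun _ => Filter.Eventually.of_forall fun _ => rfl,
    fun h => h.mono fun _ e => e.symm,
    fun h₁ h₂ => h₂.mp (h₁.mono fun _ e₁ e₂ => e₁.trans e₂)⟩

/-- The reduced product `∏ᵢ Mᵢ / D`. -/
def RedProd {I : Type*} (D : Filter I) (M : I → Type*) : Type _ :=
  Quotient (rpSetoid D M)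

noncomputable instance RedProd.instStructure {I : Type*} {L : Language} (D : Filter I)
    (M : I → Type*) [∀ i, L.Structure (M i)] : L.Structure (RedProd D M) where
  funMap F x := Quotient.mk (rpSetoid D M) fun i =>
    Language.Structure.funMap F fun k => (Quotient.out (s := rpSetoid D M) (x k)) i
  RelMap r x := ∀ᶠ i in D,
    Language.Structure.RelMap r fun k => (Quotient.out (s := rpSetoid D M) (x k)) i

/-- The reduced power `M^I/D`. -/
abbrev RedPow {I : Type*} (D : Filter I) (M : Type*) : Type _ := RedProd D fun _ : I => M

/-- The lift of a binary relation to the reduced product: it holds of two classes iff it holds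
`D`-eventually of representatives. -/
def rpLiftRel {I : Type*} (D : Filter I) {M : I → Type*} (r : ∀ i, M i → M i → Prop)
    (x y : RedProd D M) : Prop :=
  ∀ᶠ i in D, r i (Quotient.out (s := rpSetoid D M) x i) (Quotient.out (s := rpSetoid D M) y i)

/-! ### Saturation for sets of formulas -/

/-- An instance of a formula `φ(x̄,ȳ)` (with `ȳ` of some finite length `m`) with
parameters from `N`. -/
abbrev FmlInst (L : Language) (ε : ℕ) (N : Type*) :=
  Σ m : ℕ, L.Formula (Fin ε ⊕ Fin m) × (Fin m → N)

/-- Realization of an instance `φ(x̄, b̄)` at the tuple `x̄`. -/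
def RealizesInst {L : Language} {N : Type*} [L.Structure N] {ε : ℕ} (x : Fin ε → N)
    (q : FmlInst L ε N) : Prop :=
  q.2.1.Realize (Sum.elim x q.2.2)

/-- `N` is `(κ, ε, Δ)`-saturated: every set of fewer than `κ` instances of formulas from `Δ`
(in a fixed `ε`-tuple of free variables `x̄`, with parameters from `N`) which is finitely
satisfiable in `N` is realized in `N`. -/
def TupSaturated {L : Language} (κ : Cardinal) (ε : ℕ)
    (Δ : Set (Σ m : ℕ, L.Formula (Fin ε ⊕ Fin m))) (N : Type*) [L.Structure N] : Prop :=
  ∀ p : Set (FmlInst L ε N),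
    (∀ q ∈ p, (⟨q.1, q.2.1⟩ : Σ m : ℕ, L.Formula (Fin ε ⊕ Fin m)) ∈ Δ) →
    #p < κ →
    (∀ s ⊆ p, s.Finite → ∃ x : Fin ε → N, ∀ q ∈ s, RealizesInst x q) →
    ∃ x : Fin ε → N, ∀ q ∈ p, RealizesInst x q

/-- `(κ, atomically)`-saturated: `(κ,1,Δ)`-saturated where `Δ` is the set of atomic formulas
`φ(x,ȳ)`. -/
def AtomSaturated {L : Language} (κ : Cardinal) (N : Type*) [L.Structure N] : Prop :=
  TupSaturated κ 1 {q : Σ m : ℕ, L.Formula (Fin 1 ⊕ Fin m) | q.2.IsAtomic} N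

/-- A (finite) conjunction of atomic formulas. -/
inductive IsConjAtomic {L : Language} {α : Type*} : ∀ {n : ℕ}, L.BoundedFormula α n → Prop
  | of_isAtomic {n} {φ : L.BoundedFormula α n} : φ.IsAtomic → IsConjAtomic φ
  | inf {n} {φ ψ : L.BoundedFormula α n} :
      IsConjAtomic φ → IsConjAtomic ψ → IsConjAtomic (φ ⊓ ψ)

/-- `D` is a `(μ,θ)`-regular filter on `I`: some family of `μ` members of `D` is such that
every point lies in fewer than `θ` of them. -/
def RegularFilter {I : Type*} (D : Filter I) (μ θ : Cardinal) : Prop :=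
  ∃ A : μ.ord.ToType → Set I, (∀ j, A j ∈ D) ∧ ∀ i : I, #{j | i ∈ A j} < θ

/-! ### Good, excellent and moral filters on complete Boolean algebras -/

/-- `x = y mod D`. -/
def EqModD {B : Type*} [Lattice B] (Dset : Set B) (x y : B) : Prop :=
  ∃ d ∈ Dset, x ⊓ d = y ⊓ d

/-- `D` is a `(μ,θ)`-excellent filter on the complete Boolean algebra `B`.  Sequences
`⟨a_u : u ∈ [μ]^{<θ}⟩` are represented as functions defined on all subsets of `μ.ord.ToType`
but constrained only on those of cardinality `< θ`. -/
def IsExcellent {B : Type*} [CompleteBooleanAlgebra B] (Dset : Set B) (μ θ : Cardinal) : Prop :=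
  ∀ a : Set μ.ord.ToType → B, ∃ b : Set μ.ord.ToType → B,
    (∀ u : Set μ.ord.ToType, #u < θ → b u ≤ a u ∧ EqModD Dset (b u) (a u)) ∧
    ∀ u v : Set μ.ord.ToType, #u < θ → #v < θ →
      (EqModD Dset (a u ⊓ a v) (a (u ∪ v)) → b u ⊓ b v = b (u ∪ v))

/-- A monotone sequence of members of `D` indexed by `[μ]^{<θ}` with `a_∅ = ⊤`. -/
def MonSeq {B : Type*} [CompleteBooleanAlgebra B] (Dset : Set B) (θ : Cardinal) {ι : Type*}
    (a : Set ι → B) : Prop :=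
  a ∅ = ⊤ ∧ (∀ u : Set ι, #u < θ → a u ∈ Dset) ∧
    ∀ u v : Set ι, #v < θ → u ⊆ v → a v ≤ a u

/-- `b` is a multiplicative refinement of `a` consisting of members of `D`:
the notion of solution for problems of all the kinds below. -/
def MultSolution {B : Type*} [CompleteBooleanAlgebra B] (Dset : Set B) (θ : Cardinal)
    {ι : Type*} (a b : Set ι → B) : Prop :=
  (∀ u : Set ι, #u < θ → b u ∈ Dset ∧ b u ≤ a u) ∧
  ∀ u : Set ι, #u < θ → b u = ⨅ α ∈ u, b {α}

/-- `D` is a `(μ,θ)`-good filter on the complete Boolean algebra `B`. -/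
def IsGood {B : Type*} [CompleteBooleanAlgebra B] (Dset : Set B) (μ θ : Cardinal) : Prop :=
  ∀ a : Set μ.ord.ToType → B, MonSeq Dset θ a → ∃ b, MultSolution Dset θ a b

/-- Auxiliary: the model `M` (with suitable parameter tuples) witnesses the problem
condition for the pair `(c, u)`, as in clause (a)(δ) of the definition of a moral problem. -/
def ProblemWitness {B : Type*} [CompleteBooleanAlgebra B] {L : Language} (Tth : L.Theory)
    (M : Type*) [L.Structure M] {ι : Type*} {ε : ℕ}
    (ψ : ι → Σ m : ℕ, L.Formula (Fin ε ⊕ Fin m)) (a : Set ι → B) (c : B) (u : Set ι) : Prop :=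
  M ⊨ Tth ∧ ∃ bb : ∀ α : ι, Fin (ψ α).1 → M, ∀ v ⊆ u,
    (c ≤ a v → ∃ x : Fin ε → M, ∀ α ∈ v, (ψ α).2.Realize (Sum.elim x (bb α))) ∧
    (c ≤ (a v)ᶜ → ¬ ∃ x : Fin ε → M, ∀ α ∈ v, (ψ α).2.Realize (Sum.elim x (bb α)))

/-- `a` is a `D`-`(μ,θ,ε,Δ,T)`-(moral) problem. -/
def IsMoralProblem {B : Type*} [CompleteBooleanAlgebra B] (Dset : Set B) {L : Language}
    (Tth : L.Theory) (μ θ : Cardinal) (ε : ℕ)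
    (Δ : Set (Σ m : ℕ, L.Formula (Fin ε ⊕ Fin m))) (a : Set μ.ord.ToType → B) : Prop :=
  MonSeq Dset θ a ∧
  ∃ ψ : μ.ord.ToType → Σ m : ℕ, L.Formula (Fin ε ⊕ Fin m),
    (∀ α, ψ α ∈ Δ) ∧
    ∀ c : B, c ≠ ⊥ → ∀ u : Set μ.ord.ToType, #u < θ →
      ∃ (M : Type) (iM : L.Structure M), @ProblemWitness B _ L Tth M iM _ ε ψ a c u

/-- `D` is a `(μ,θ,ε,Δ,T)`-moral filter on `B`: every problem has a solution. -/
def IsMoral {B : Type*} [CompleteBooleanAlgebra B] (Dset : Set B) {L : Language}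
    (Tth : L.Theory) (μ θ : Cardinal) (ε : ℕ)
    (Δ : Set (Σ m : ℕ, L.Formula (Fin ε ⊕ Fin m))) : Prop :=
  ∀ a : Set μ.ord.ToType → B, IsMoralProblem Dset Tth μ θ ε Δ a →
    ∃ b, MultSolution Dset θ a b

section Los

variable {I : Type} {D : Filter I} {L : FirstOrder.Language.{0,0}} {M : I → Type} [∀ i, L.Structure (M i)]

/-- Class of a function in the reduced product. -/
def mq (D : Filter I) (M : I → Type) (f : ∀ i, M i) : RedProd D M :=
  Quotient.mk (rpSetoid D M) f

/-- Representative of a class. -/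
noncomputable def outf (y : RedProd D M) : ∀ i, M i := Quotient.out (s := rpSetoid D M) y

lemma out_mq (f : ∀ i, M i) : ∀ᶠ i in D, outf (mq D M f) i = f i :=
  Quotient.mk_out (s := rpSetoid D M) f

lemma mq_out (y : RedProd D M) : mq D M (outf y) = y :=
  Quotient.out_eq (s := rpSetoid D M) y

lemma mq_eq_iff {f g : ∀ i, M i} : mq D M f = mq D M g ↔ ∀ᶠ i in D, f i = g i :=
  ⟨Quotient.exact (s := rpSetoid D M), Quotient.sound (s := rpSetoid D M)⟩

lemma funMap_mk {n : ℕ} (F : L.Functions n) (x : Fin n → RedProd D M) :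
    (Language.Structure.funMap F x : RedProd D M) = mq D M (fun i =>
      Language.Structure.funMap F fun k => outf (x k) i) := rfl

lemma relMap_mk {n : ℕ} (R : L.Relations n) (x : Fin n → RedProd D M) :
    Language.Structure.RelMap (M := RedProd D M) R x ↔
      ∀ᶠ i in D, Language.Structure.RelMap R fun k => outf (x k) i := Iff.rfl

lemma realize_term {γ : Type} (t : L.Term γ) (g : γ → ∀ i, M i) :
    (Language.Term.realize (M := RedProd D M) (fun v => mq D M (g v)) t)
      = mq D M (fun i => Language.Term.realize (fun v => g v i) t) := by
  induction t with
  | var v => rfl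
  | func F ts ih =>
    show (Language.Structure.funMap F fun k =>
        Language.Term.realize (fun v => mq D M (g v)) (ts k)) = _
    rw [funMap_mk, mq_eq_iff]
    have h : ∀ᶠ i in D, ∀ k, outf
        (Language.Term.realize (M := RedProd D M) (fun v => mq D M (g v)) (ts k)) i
          = Language.Term.realize (fun v => g v i) (ts k) := by
      rw [Filter.eventually_all]
      intro k
      rw [ih k]
      exact out_mq _
    exact h.mono fun i hi => by
      show Language.Structure.funMap F _ = Language.Structure.funMap F _
      exact congrArg _ (funext hi)

lemma realize_conjAtomic {γ : Type} {n : ℕ} (φ : L.BoundedFormula γ n) (hφ : IsConjAtomic φ)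
    (g : γ → ∀ i, M i) (xs : Fin n → ∀ i, M i) :
    φ.Realize (fun v => mq D M (g v)) (fun k => mq D M (xs k)) ↔
      ∀ᶠ i in D, φ.Realize (fun v => g v i) (fun k => xs k i) := by
  induction hφ with
  | of_isAtomic h =>
    cases h with
    | equal t₁ t₂ =>
      rw [Language.BoundedFormula.realize_bdEqual]
      have e : (Sum.elim (fun v => mq D M (g v)) (fun k => mq D M (xs k)) :
          γ ⊕ Fin n → RedProd D M) = fun w => mq D M (Sum.elim g xs w) := by
        funext w; cases w <;> rfl
      rw [e, realize_term, realize_term, mq_eq_iff]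
      apply Filter.eventually_congr
      apply Filter.Eventually.of_forall
      intro i
      rw [Language.BoundedFormula.realize_bdEqual]
      have e2 : (Sum.elim (fun v => g v i) (fun k => xs k i) : γ ⊕ Fin n → M i)
          = fun w => Sum.elim g xs w i := by funext w; cases w <;> rfl
      rw [e2]
    | rel R ts =>
      rw [Language.BoundedFormula.realize_rel, relMap_mk]
      have e : (Sum.elim (fun v => mq D M (g v)) (fun k => mq D M (xs k)) :
          γ ⊕ Fin _ → RedProd D M) = fun w => mq D M (Sum.elim g xs w) := by
        funext w; cases w <;> rfl
      have h : ∀ᶠ i in D, ∀ k, outf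
          (Language.Term.realize (M := RedProd D M)
            (Sum.elim (fun v => mq D M (g v)) (fun k => mq D M (xs k)))
            (ts k)) i = Language.Term.realize (fun w => Sum.elim g xs w i) (ts k) := by
        rw [Filter.eventually_all]
        intro k
        rw [e, realize_term]
        exact out_mq _
      apply Filter.eventually_congr
      refine h.mono fun i hi => ?_
      rw [Language.BoundedFormula.realize_rel]
      have e2 : (Sum.elim (fun v => g v i) (fun k => xs k i) : γ ⊕ Fin _ → M i)
          = fun w => Sum.elim g xs w i := by funext w; cases w <;> rfl
      rw [e2]
      exact iff_of_eq (congrArg (Language.Structure.RelMap R) (funext hi))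
  | inf h₁ h₂ ih₁ ih₂ =>
    rw [Language.BoundedFormula.realize_inf, ih₁, ih₂, ← Filter.eventually_and]
    apply Filter.eventually_congr
    exact Filter.Eventually.of_forall fun i => (Language.BoundedFormula.realize_inf).symm

lemma realize_inst_iff {ε m : ℕ} (φ : L.Formula (Fin ε ⊕ Fin m)) (hφ : IsConjAtomic φ)
    (x : Fin ε → ∀ i, M i) (bp : Fin m → ∀ i, M i) :
    φ.Realize (Sum.elim (fun k => mq D M (x k)) (fun k => mq D M (bp k))) ↔
      ∀ᶠ i in D, φ.Realize (Sum.elim (fun k => x k i) (fun k => bp k i)) := by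
  have key := realize_conjAtomic (D := D) φ hφ (Sum.elim x bp) (fun k _ => k.elim0)
  have e0 : ∀ (N : Type) (f g : Fin 0 → N), f = g := fun _ f g => funext fun k => k.elim0
  have eN : (fun v => mq D M (Sum.elim x bp v)) =
      (Sum.elim (fun k => mq D M (x k)) (fun k => mq D M (bp k)) :
        Fin ε ⊕ Fin m → RedProd D M) := by
    funext w; cases w <;> rfl
  rw [eN] at key
  refine Iff.trans ?_ (key.trans ?_)
  · exact iff_of_eq (congrArg _ (e0 _ default _))
  · apply Filter.eventually_congr
    apply Filter.Eventually.of_forall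
    intro i
    have e1 : (fun v => Sum.elim x bp v i) =
        (Sum.elim (fun k => x k i) (fun k => bp k i) : Fin ε ⊕ Fin m → M i) := by
      funext w; cases w <;> rfl
    rw [e1]
    exact iff_of_eq (congrArg _ (e0 _ _ default))

end Los


section Directions

variable {I : Type} {D : Filter I} {L : FirstOrder.Language.{0,0}} {Tth : L.Theory}
  {μ : Cardinal} {ε : ℕ} {Δ : Set (Σ m : ℕ, L.Formula (Fin ε ⊕ Fin m))}

theorem dir1 (hreg : RegularFilter D μ ℵ₀) (hΔ : ∀ q ∈ Δ, IsConjAtomic q.2)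
    (hmoral : IsMoral {A : Set I | A ∈ D} Tth μ ℵ₀ ε Δ)
    (M : I → Type) [∀ i, L.Structure (M i)] (hM : ∀ i, M i ⊨ Tth) :
    TupSaturated (Order.succ μ) ε Δ (RedProd D M) := by
  intro p hpΔ hpcard hfin
  obtain ⟨X0, -⟩ := hfin ∅ (Set.empty_subset p) Set.finite_empty
  have hMne : ∀ i, Nonempty (Fin ε → M i) := fun i => ⟨fun k => outf (X0 k) i⟩
  rcases Set.eq_empty_or_nonempty p with hp | hp
  · exact ⟨X0, by simp [hp]⟩
  haveI : Nonempty p := hp.to_subtype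
  have hle : #p ≤ #(μ.ord.ToType) := by
    rw [Cardinal.mk_ord_toType]
    rw [Order.lt_succ_iff] at hpcard
    exact hpcard
  obtain ⟨g⟩ := (Cardinal.le_def _ _).mp hle
  let q : μ.ord.ToType → p := Function.invFun g
  have hq : Function.Surjective q := Function.invFun_surjective g.injective
  let bb : ∀ α, Fin ((q α : FmlInst L ε (RedProd D M)).1) → ∀ i, M i :=
    fun α k => outf ((q α).1.2.2 k)
  let a : Set μ.ord.ToType → Set I := fun u =>
    {i | ∃ x : Fin ε → M i, ∀ α ∈ u,
      ((q α).1.2.1).Realize (Sum.elim x (fun k => bb α k i))}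
  have hmon : MonSeq {A : Set I | A ∈ D} ℵ₀ a := by
    refine ⟨?_, ?_, ?_⟩
    · rw [Set.top_eq_univ]
      apply Set.eq_univ_of_forall
      intro i
      exact ⟨(hMne i).some, fun α h => absurd h (Set.notMem_empty α)⟩
    · intro u hu
      have hufin : u.Finite := Cardinal.lt_aleph0_iff_set_finite.mp hu
      obtain ⟨X, hX⟩ := hfin ((fun α => ((q α : p) : FmlInst L ε (RedProd D M))) '' u)
        (by rintro _ ⟨α, hα, rfl⟩; exact (q α).2) (hufin.image _)
      have hαall : ∀ α ∈ u, ∀ᶠ i in D, ((q α).1.2.1).Realize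
          (Sum.elim (fun k => outf (X k) i) (fun k => bb α k i)) := by
        intro α hα
        have hr : RealizesInst X ((q α : p) : FmlInst L ε (RedProd D M)) :=
          hX _ ⟨α, hα, rfl⟩
        have e : (Sum.elim X ((q α).1.2.2) : _ → RedProd D M) =
            Sum.elim (fun k => mq D M (outf (X k))) (fun k => mq D M (bb α k)) := by
          funext w
          cases w with
          | inl k => exact (mq_out (X k)).symm
          | inr k => exact (mq_out _).symm
        unfold RealizesInst at hr
        rw [e] at hr
        exact (realize_inst_iff _ (hΔ _ (hpΔ _ (q α).2)) _ _).mp hr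
      have hev := (Filter.eventually_all_finite hufin).mpr hαall
      refine Filter.mem_of_superset hev ?_
      intro i hi
      exact ⟨fun k => outf (X k) i, hi⟩
    · intro u v hv huv i hi
      obtain ⟨x, hx⟩ := hi
      exact ⟨x, fun α hα => hx α (huv hα)⟩
  have hprob : IsMoralProblem {A : Set I | A ∈ D} Tth μ ℵ₀ ε Δ a := by
    refine ⟨hmon, fun α => ⟨(q α).1.1, (q α).1.2.1⟩, fun α => hpΔ _ (q α).2, ?_⟩
    intro c hc u _
    obtain ⟨i, hi⟩ := Set.nonempty_iff_ne_empty.mpr (by rwa [Set.bot_eq_empty] at hc)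
    refine ⟨M i, inferInstance, hM i, fun α k => bb α k i, ?_⟩
    intro v _
    constructor
    · intro hcv
      exact hcv hi
    · intro hcv hex
      exact (hcv hi) hex
  obtain ⟨b, hb⟩ := hmoral a hprob
  obtain ⟨A, hA, hreg2⟩ := hreg
  let w : I → Set μ.ord.ToType := fun i => {α | i ∈ b {α} ∩ A α}
  have hwfin : ∀ i, #(w i) < ℵ₀ := fun i =>
    lt_of_le_of_lt (Cardinal.mk_le_mk_of_subset (fun α hα => hα.2)) (hreg2 i)
  have hiw : ∀ i, ∃ x : Fin ε → M i, ∀ α ∈ w i,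
      ((q α).1.2.1).Realize (Sum.elim x (fun k => bb α k i)) := by
    intro i
    have h1 : i ∈ b (w i) := by
      rw [hb.2 (w i) (hwfin i)]
      have : (⨅ α ∈ w i, b {α}) = ⋂ α ∈ w i, b {α} := rfl
      rw [this]
      exact Set.mem_iInter₂.mpr fun α hα => hα.1
    exact (hb.1 (w i) (hwfin i)).2 h1
  choose xx hxx using hiw
  refine ⟨fun k => mq D M (fun i => xx i k), ?_⟩
  intro qf hqf
  obtain ⟨α, hα⟩ := hq ⟨qf, hqf⟩
  have hkey : RealizesInst (fun k => mq D M (fun i => xx i k))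
      ((q α : p) : FmlInst L ε (RedProd D M)) := by
    show ((q α).1.2.1).Realize (Sum.elim _ ((q α).1.2.2))
    have e : (Sum.elim (fun k => mq D M (fun i => xx i k)) ((q α).1.2.2) :
        _ → RedProd D M) = Sum.elim (fun k => mq D M (fun i => xx i k))
          (fun k => mq D M (bb α k)) := by
      funext w'
      cases w' with
      | inl k => rfl
      | inr k => exact (mq_out _).symm
    rw [e]
    apply (realize_inst_iff _ (hΔ _ (hpΔ _ (q α).2)) _ _).mpr
    have hDset : b {α} ∩ A α ∈ D :=
      Filter.inter_mem (hb.1 {α} (Cardinal.lt_aleph0_iff_set_finite.mpr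
        (Set.finite_singleton α))).1 (hA α)
    refine Filter.mem_of_superset hDset ?_
    intro i hi
    exact hxx i α hi
  rw [hα] at hkey
  exact hkey

theorem dir2 (hreg : RegularFilter D μ ℵ₀) (hΔ : ∀ q ∈ Δ, IsConjAtomic q.2)
    (hsat : ∀ (M : I → Type) [∀ i, L.Structure (M i)],
      (∀ i, M i ⊨ Tth) → TupSaturated (Order.succ μ) ε Δ (RedProd D M)) :
    IsMoral {A : Set I | A ∈ D} Tth μ ℵ₀ ε Δ := by
  rintro a ⟨hmon, ψ, hψΔ, hwit⟩
  obtain ⟨A, hA, hreg2⟩ := hreg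
  let u : I → Set μ.ord.ToType := fun i => {α | i ∈ A α}
  have W : ∀ i, ∃ (Mi : Type) (iM : L.Structure Mi),
      @ProblemWitness (Set I) _ L Tth Mi iM _ ε ψ a {i} (u i) := fun i =>
    hwit {i} (by rw [Set.bot_eq_empty]; exact Set.singleton_ne_empty i) (u i) (hreg2 i)
  choose Mi iMi hWit using W
  letI : ∀ i, L.Structure (Mi i) := iMi
  have hMT : ∀ i, Mi i ⊨ Tth := fun i => (hWit i).1
  choose bbw hPw using fun i => (hWit i).2
  let Q : μ.ord.ToType → FmlInst L ε (RedProd D Mi) := fun α =>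
    ⟨(ψ α).1, ((ψ α).2, fun k => mq D Mi (fun i => bbw i α k))⟩
  have hMne : ∀ i, ∃ x : Fin ε → Mi i, True := by
    intro i
    refine ((hPw i ∅ (Set.empty_subset _)).1 ?_).imp fun x _ => trivial
    rw [hmon.1]
    exact le_top
  obtain ⟨X, hX⟩ := hsat Mi hMT (Set.range Q)
    (by rintro _ ⟨α, rfl⟩; exact hψΔ α)
    (lt_of_le_of_lt (le_of_le_of_eq Cardinal.mk_range_le (Cardinal.mk_ord_toType μ))
      (Order.lt_succ μ))
    (by
      intro s hs hsfin
      have hchoice : ∀ q : s, ∃ α, Q α = (q : FmlInst L ε (RedProd D Mi)) :=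
        fun q => hs q.2
      choose F hF using hchoice
      haveI : Finite s := hsfin.to_subtype
      have hvfin : (Set.range F).Finite := Set.finite_range F
      have hJ : (a (Set.range F) ∩ ⋂ α ∈ Set.range F, A α) ∈ D :=
        Filter.inter_mem (hmon.2.1 _ (Cardinal.lt_aleph0_iff_set_finite.mpr hvfin))
          ((Filter.biInter_mem hvfin).mpr fun α _ => hA α)
      have hx : ∀ i, ∃ x : Fin ε → Mi i,
          i ∈ (a (Set.range F) ∩ ⋂ α ∈ Set.range F, A α) →
          ∀ α ∈ Set.range F, (ψ α).2.Realize (Sum.elim x (bbw i α)) := by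
        intro i
        by_cases hi : i ∈ (a (Set.range F) ∩ ⋂ α ∈ Set.range F, A α)
        · have hsub : Set.range F ⊆ u i := fun α hα => Set.mem_iInter₂.mp hi.2 α hα
          have hex := (hPw i (Set.range F) hsub).1 (Set.singleton_subset_iff.mpr hi.1)
          exact hex.imp fun x hx _ => hx
        · exact (hMne i).imp fun x _ h => absurd h hi
      choose xx hxx using hx
      refine ⟨fun k => mq D Mi (fun i => xx i k), ?_⟩
      intro qf hqf
      rw [show qf = Q (F ⟨qf, hqf⟩) from (hF ⟨qf, hqf⟩ : Q (F ⟨qf, hqf⟩) = qf).symm]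
      show ((ψ (F ⟨qf, hqf⟩)).2).Realize (Sum.elim (fun k => mq D Mi fun i => xx i k)
        (fun k => mq D Mi fun i => bbw i (F ⟨qf, hqf⟩) k))
      apply (realize_inst_iff _ (hΔ _ (hψΔ _)) _ _).mpr
      refine Filter.mem_of_superset hJ fun i hi => ?_
      exact hxx i hi _ (Set.mem_range_self _))
  let S : μ.ord.ToType → Set I := fun α =>
    {i | (ψ α).2.Realize (Sum.elim (fun k => outf (X k) i) (fun k => bbw i α k))} ∩ A α
  have hSD : ∀ α, S α ∈ D := by
    intro α
    have hr : RealizesInst X (Q α) := hX (Q α) ⟨α, rfl⟩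
    have e : (Sum.elim X ((Q α).2.2) : _ → RedProd D Mi) =
        Sum.elim (fun k => mq D Mi (outf (X k)))
          (fun k => mq D Mi (fun i => bbw i α k)) := by
      funext w
      cases w with
      | inl k => exact (mq_out _).symm
      | inr k => rfl
    unfold RealizesInst at hr
    rw [e] at hr
    have hev := (realize_inst_iff _ (hΔ _ (hψΔ α)) _ _).mp hr
    exact Filter.inter_mem hev (hA α)
  refine ⟨fun v => ⋂ α ∈ v, S α, ?_, ?_⟩
  · intro v hv
    have hvfin : v.Finite := Cardinal.lt_aleph0_iff_set_finite.mp hv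
    constructor
    · exact (Filter.biInter_mem hvfin).mpr fun α _ => hSD α
    · intro i hi
      have hmem := Set.mem_iInter₂.mp hi
      have hsub : v ⊆ u i := fun α hα => (hmem α hα).2
      by_contra hna
      refine (hPw i v hsub).2 (Set.singleton_subset_iff.mpr hna) ?_
      exact ⟨fun k => outf (X k) i, fun α hα => (hmem α hα).1⟩
  · intro v _
    have h1 : ∀ α : μ.ord.ToType, (⋂ β ∈ ({α} : Set μ.ord.ToType), S β) = S α :=
      fun α => Set.biInter_singleton α S
    have h2 : (⨅ α ∈ v, ⋂ β ∈ ({α} : Set μ.ord.ToType), S β) = ⋂ α ∈ v, S α := by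
      rw [show (⨅ α ∈ v, ⋂ β ∈ ({α} : Set μ.ord.ToType), S β) =
        ⋂ α ∈ v, ⋂ β ∈ ({α} : Set μ.ord.ToType), S β from rfl]
      exact Set.iInter₂_congr fun α _ => h1 α
    exact h2.symm

end Directions

/-- For a `(μ,ℵ₀)`-regular filter `D` on a set `I`, a theory `T`, `ε < ω` and a
set `Δ` of conjunctions of atomic formulas `φ(x̄,ȳ)` with `x̄` a fixed `ε`-tuple, the
following are equivalent: (B) `D` is `(μ,ℵ₀,ε,Δ,T)`-moral; (C) every reduced product
`∏ₛ Mₛ/D` of models of `T` is `(μ⁺,ε,Δ)`-saturated. -/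
theorem isMoral_iff_redProd_saturated {I : Type} (D : Filter I) {L : FirstOrder.Language.{0, 0}}
    (Tth : L.Theory) (μ : Cardinal) (hreg : RegularFilter D μ ℵ₀) (ε : ℕ)
    (Δ : Set (Σ m : ℕ, L.Formula (Fin ε ⊕ Fin m)))
    (hΔ : ∀ q ∈ Δ, IsConjAtomic q.2) :
    IsMoral {A : Set I | A ∈ D} Tth μ ℵ₀ ε Δ ↔
      ∀ (M : I → Type) [∀ i, L.Structure (M i)],
        (∀ i, M i ⊨ Tth) → TupSaturated (Order.succ μ) ε Δ (RedProd D M) := by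
  constructor
  · intro hmoral M _ hM
    exact dir1 hreg hΔ hmoral M hM
  · intro hsat
    exact dir2 hreg hΔ hsat

end Shelah1064
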